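/- Let d ≥ 2 and let p_0, …, p_d be real polynomials with deg p_n = n and positive leading coefficient, orthonormal with respect to a nonnegative weight function w on ℝ (i.e. ∫ℝ p_i(x) p_j(x) w(x) dx = δ_{ij} for 0 ≤ i, j ≤ d). Let y_0, …, y_{d−2} be the d−1 distinct real zeros of p_{d−1} and let α ∈ ℝ. Define v³_j = (p_0(y_j), …, p_{d−2}(y_j), 0) ∈ ℂ^d and v⁴_j = (p_0(y_j), e^{iα} p_1(y_j), …, e^{i(d−2)α} p_{d−2}(y_j), 0) ∈ ℂ^d for j = 0, …, d−2, and set v³_{d−1} = v⁴_{d−1} = e_{d−1}, the last standard basis vector of ℂ^d. Then the normalized vectors { v³_j / ‖v³_j‖ : j = 0, …, d−1 } form an orthonormal basis of ℂ^d, and so do { v⁴_j / ‖v⁴_j‖ : j = 0, …, d−1 }. -/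

import Mathlib

open Matrix ComplexOrder Polynomial MeasureTheory

/-- The Euclidean norm of a vector in `ℂ^d`. -/
noncomputable def euclNorm {d : ℕ} (v : Fin d → ℂ) : ℝ :=
  Real.sqrt (∑ k, Complex.normSq (v k))

/-- The vector `v¹_j = (p₀(x_j), …, p_{d-1}(x_j))`. -/
noncomputable def vOne (p : ℕ → Polynomial ℝ) {d : ℕ} (x : Fin d → ℝ) (j : Fin d) :
    Fin d → ℂ :=
  fun k => (((p (k : ℕ)).eval (x j) : ℝ) : ℂ)

/-- The vector `v²_j = (p₀(x_j), e^{iα} p₁(x_j), …, e^{i(d-1)α} p_{d-1}(x_j))`. -/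
noncomputable def vTwo (p : ℕ → Polynomial ℝ) (α : ℝ) {d : ℕ} (x : Fin d → ℝ) (j : Fin d) :
    Fin d → ℂ :=
  fun k => Complex.exp (((k : ℕ) : ℂ) * α * Complex.I) * (((p (k : ℕ)).eval (x j) : ℝ) : ℂ)

/-- The vector `v³_j = (p₀(y_j), …, p_{d-2}(y_j), 0)` for `j ≤ d-2`, and
`v³_{d-1} = e_{d-1}`. -/
noncomputable def vThree (p : ℕ → Polynomial ℝ) {d : ℕ} (y : Fin (d - 1) → ℝ) (j : Fin d) :
    Fin d → ℂ :=
  if h : (j : ℕ) < d - 1 then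
    fun k => if (k : ℕ) < d - 1 then (((p (k : ℕ)).eval (y ⟨(j : ℕ), h⟩) : ℝ) : ℂ) else 0
  else fun k => if (k : ℕ) = d - 1 then 1 else 0

/-- The vector `v⁴_j = (p₀(y_j), e^{iα} p₁(y_j), …, e^{i(d-2)α} p_{d-2}(y_j), 0)` for
`j ≤ d-2`, and `v⁴_{d-1} = e_{d-1}`. -/
noncomputable def vFour (p : ℕ → Polynomial ℝ) (α : ℝ) {d : ℕ} (y : Fin (d - 1) → ℝ)
    (j : Fin d) : Fin d → ℂ :=
  if h : (j : ℕ) < d - 1 then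
    fun k => if (k : ℕ) < d - 1 then
      Complex.exp (((k : ℕ) : ℂ) * α * Complex.I) * (((p (k : ℕ)).eval (y ⟨(j : ℕ), h⟩) : ℝ) : ℂ)
    else 0
  else fun k => if (k : ℕ) = d - 1 then 1 else 0

/-- The normalization `v / ‖v‖` of a vector `v ∈ ℂ^d`. -/
noncomputable def normalized {d : ℕ} (v : Fin d → ℂ) : Fin d → ℂ :=
  fun k => ((euclNorm v : ℝ) : ℂ)⁻¹ * v k

/-- A family of `d` vectors in `ℂ^d` is an orthonormal basis: the vectors are orthonormal
(w.r.t. the inner product conjugate-linear in the first argument) and they span `ℂ^d`. -/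
def IsONB {d : ℕ} (u : Fin d → Fin d → ℂ) : Prop :=
  (∀ i j, star (u i) ⬝ᵥ u j = if i = j then 1 else 0) ∧
    Submodule.span ℂ (Set.range u) = ⊤

/-- The outcome probability of the (unnormalized) basis vector `v` on the vector state `ψ`
coincides with its outcome probability on the state `ρ`:
`|⟨v|ψ⟩|² = ⟨v|ρ|v⟩`. -/
def probEq {d : ℕ} (v ψ : Fin d → ℂ) (ρ : Matrix (Fin d) (Fin d) ℂ) : Prop :=
  ((Complex.normSq (star v ⬝ᵥ ψ) : ℝ) : ℂ) = star v ⬝ᵥ ρ.mulVec v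

section Helpers

open Complex in
/-- Expansion of a polynomial in a graded basis. -/
lemma expand_aux (q : ℕ → Polynomial ℝ) (hdeg : ∀ j, (q j).natDegree = j)
    (hne : ∀ j, (q j).leadingCoeff ≠ 0) :
    ∀ (M : ℕ) (f : Polynomial ℝ), f.natDegree ≤ M →
      ∃ a : ℕ → ℝ, f = ∑ j ∈ Finset.range (M + 1), C (a j) * q j := by
  intro M
  induction M with
  | zero =>
    intro f hf
    refine ⟨fun _ => f.coeff 0 / (q 0).coeff 0, ?_⟩
    have hc : (q 0).coeff 0 ≠ 0 := by
      have := hne 0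
      rwa [Polynomial.leadingCoeff, hdeg 0] at this
    have h0 : q 0 = C ((q 0).coeff 0) := eq_C_of_natDegree_eq_zero (hdeg 0)
    rw [Finset.sum_range_one]
    beta_reduce
    set c0 := (q 0).coeff 0 with hc0
    rw [h0, ← C_mul, div_mul_cancel₀ _ hc, ← eq_C_of_natDegree_eq_zero (Nat.le_zero.mp hf)]
  | succ M ih =>
    intro f hf
    set a : ℝ := f.coeff (M + 1) / (q (M + 1)).leadingCoeff with ha
    have hg : (f - C a * q (M + 1)).natDegree ≤ M := by
      rw [natDegree_le_iff_coeff_eq_zero]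
      intro n hn
      rw [coeff_sub, coeff_C_mul]
      rcases eq_or_lt_of_le (Nat.succ_le_of_lt hn) with h | h
      · have hq : (q (M + 1)).coeff (M + 1) = (q (M + 1)).leadingCoeff := by
          rw [Polynomial.leadingCoeff, hdeg (M + 1)]
        rw [← h, hq, ha, div_mul_cancel₀ _ (hne (M + 1)), sub_self]
      · have h1 : f.coeff n = 0 :=
          coeff_eq_zero_of_natDegree_lt (lt_of_le_of_lt hf h)
        have h2 : (q (M + 1)).coeff n = 0 :=
          coeff_eq_zero_of_natDegree_lt (by rw [hdeg]; exact h)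
        rw [h1, h2, mul_zero, sub_zero]
    obtain ⟨b, hb⟩ := ih _ hg
    refine ⟨fun j => if j = M + 1 then a else b j, ?_⟩
    rw [Finset.sum_range_succ]
    beta_reduce
    rw [if_pos rfl]
    have heq : ∑ j ∈ Finset.range (M + 1), C (if j = M + 1 then a else b j) * q j
        = ∑ j ∈ Finset.range (M + 1), C (b j) * q j := by
      refine Finset.sum_congr rfl fun j hj => ?_
      rw [if_neg (by have := Finset.mem_range.mp hj; omega)]
    rw [heq, ← hb]
    ring

/-- Sum over `Fin d` of an `ite (· < N)` truncation equals the sum over `Fin N`. -/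
lemma sum_ite_lt {M : Type*} [AddCommMonoid M] {d : ℕ} (N : ℕ) (hNd : N ≤ d) (F : ℕ → M) :
    ∑ k : Fin d, (if (k : ℕ) < N then F (k : ℕ) else 0) = ∑ k : Fin N, F (k : ℕ) := by
  rw [Fin.sum_univ_eq_sum_range (fun k => if k < N then F k else 0),
    Fin.sum_univ_eq_sum_range (fun k => F k) N]
  rw [← Finset.sum_subset (Finset.range_subset_range.mpr hNd)
    (fun x _ hx => by rw [if_neg (by simpa using hx)])]
  exact Finset.sum_congr rfl fun x hx => by rw [if_pos (Finset.mem_range.mp hx)]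

/-- A family with orthonormal dot products is an ONB. -/
lemma isONB_of_dot {d : ℕ} (hd : 0 < d) (u : Fin d → Fin d → ℂ)
    (h : ∀ i j, star (u i) ⬝ᵥ u j = if i = j then 1 else 0) : IsONB u := by
  refine ⟨h, ?_⟩
  have hli : LinearIndependent ℂ u := by
    rw [Fintype.linearIndependent_iff]
    intro g hg i
    have h2 : star (u i) ⬝ᵥ (∑ j, g j • u j) = g i := by
      simp only [dotProduct, Finset.sum_apply, Pi.smul_apply, smul_eq_mul,
        Finset.mul_sum]
      rw [Finset.sum_comm]
      have : ∀ j, ∑ k, star (u i) k * (g j * u j k) = g j * (star (u i) ⬝ᵥ u j) := by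
        intro j
        rw [dotProduct, Finset.mul_sum]
        exact Finset.sum_congr rfl fun k _ => by ring
      simp_rw [this, h]
      simp
    rw [hg] at h2
    simp [dotProduct] at h2
    exact h2.symm
  haveI : Nonempty (Fin d) := ⟨⟨0, hd⟩⟩
  exact hli.span_eq_top_of_card_eq_finrank (by simp)

end Helpers

section VGen

/-- Common generalization of `vThree` and `vFour`: entries carry a phase `e k`. -/
noncomputable def vGen (p : ℕ → Polynomial ℝ) (e : ℕ → ℂ) {d : ℕ} (y : Fin (d - 1) → ℝ)
    (j : Fin d) : Fin d → ℂ :=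
  if h : (j : ℕ) < d - 1 then
    fun k => if (k : ℕ) < d - 1 then
      e (k : ℕ) * (((p (k : ℕ)).eval (y ⟨(j : ℕ), h⟩) : ℝ) : ℂ) else 0
  else fun k => if (k : ℕ) = d - 1 then 1 else 0

lemma vThree_eq_vGen (p : ℕ → Polynomial ℝ) {d : ℕ} (y : Fin (d - 1) → ℝ) :
    vThree p y = vGen p (fun _ => 1) y := by
  funext j k
  by_cases h : (j : ℕ) < d - 1 <;> simp [vThree, vGen, h]

lemma vFour_eq_vGen (p : ℕ → Polynomial ℝ) (α : ℝ) {d : ℕ} (y : Fin (d - 1) → ℝ) :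
    vFour p α y = vGen p (fun k => Complex.exp ((k : ℂ) * α * Complex.I)) y := by
  funext j k
  by_cases h : (j : ℕ) < d - 1 <;> simp [vFour, vGen, h]

lemma isONB_vGen {d : ℕ} (hd : 2 ≤ d) (p : ℕ → Polynomial ℝ) (e : ℕ → ℂ)
    (he : ∀ k, (starRingEnd ℂ) (e k) * e k = 1)
    (y : Fin (d - 1) → ℝ)
    (hS0 : ∀ i j : Fin (d - 1), i ≠ j →
      ∑ k : Fin (d - 1), (p (k : ℕ)).eval (y i) * (p (k : ℕ)).eval (y j) = 0)
    (hSpos : ∀ i : Fin (d - 1),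
      0 < ∑ k : Fin (d - 1), (p (k : ℕ)).eval (y i) * (p (k : ℕ)).eval (y i)) :
    IsONB (fun j => normalized (vGen p e y j)) := by
  set S : Fin (d - 1) → Fin (d - 1) → ℝ :=
    fun i j => ∑ k : Fin (d - 1), (p (k : ℕ)).eval (y i) * (p (k : ℕ)).eval (y j) with hSdef
  have hNd : d - 1 ≤ d := Nat.sub_le d 1
  have hlast : d - 1 < d := by omega
  have heNS : ∀ k, Complex.normSq (e k) = 1 := by
    intro k
    have h1 := Complex.normSq_eq_conj_mul_self (z := e k)
    rw [he k] at h1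
    exact_mod_cast h1
  -- dot products of the unnormalized vectors
  have hdot : ∀ i j : Fin d, star (vGen p e y i) ⬝ᵥ vGen p e y j =
      if hi : (i : ℕ) < d - 1 then
        (if hj : (j : ℕ) < d - 1 then ((S ⟨i, hi⟩ ⟨j, hj⟩ : ℝ) : ℂ) else 0)
      else (if (j : ℕ) < d - 1 then 0 else 1) := by
    intro i j
    by_cases hi : (i : ℕ) < d - 1 <;> by_cases hj : (j : ℕ) < d - 1
    · rw [dif_pos hi, dif_pos hj]
      simp only [vGen, dif_pos hi, dif_pos hj, dotProduct, Pi.star_apply]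
      have hterm : ∀ k : Fin d,
          star (if (k : ℕ) < d - 1 then
              e (k : ℕ) * (((p (k : ℕ)).eval (y ⟨(i : ℕ), hi⟩) : ℝ) : ℂ) else 0) *
            (if (k : ℕ) < d - 1 then
              e (k : ℕ) * (((p (k : ℕ)).eval (y ⟨(j : ℕ), hj⟩) : ℝ) : ℂ) else 0) =
          if (k : ℕ) < d - 1 then
            (((p (k : ℕ)).eval (y ⟨(i : ℕ), hi⟩) * (p (k : ℕ)).eval (y ⟨(j : ℕ), hj⟩) : ℝ) : ℂ)
          else 0 := by
        intro k
        split_ifs with h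
        · rw [Complex.ofReal_mul]
          simp only [star_mul', Complex.star_def, Complex.conj_ofReal]
          linear_combination ((((p (k : ℕ)).eval (y ⟨(i : ℕ), hi⟩) : ℝ) : ℂ) *
            (((p (k : ℕ)).eval (y ⟨(j : ℕ), hj⟩) : ℝ) : ℂ)) * he (k : ℕ)
        · simp
      rw [Finset.sum_congr rfl fun k _ => hterm k,
        sum_ite_lt (d - 1) hNd (fun n =>
          (((p n).eval (y ⟨(i : ℕ), hi⟩) * (p n).eval (y ⟨(j : ℕ), hj⟩) : ℝ) : ℂ))]
      simp only [hSdef]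
      push_cast
      rfl
    · rw [dif_pos hi, dif_neg hj]
      simp only [vGen, dif_pos hi, dif_neg hj, dotProduct, Pi.star_apply]
      refine Finset.sum_eq_zero fun k _ => ?_
      by_cases hk : (k : ℕ) = d - 1
      · simp [hk]
      · simp [hk]
    · rw [dif_neg hi, if_pos hj]
      simp only [vGen, dif_neg hi, dif_pos hj, dotProduct, Pi.star_apply]
      refine Finset.sum_eq_zero fun k _ => ?_
      by_cases hk : (k : ℕ) = d - 1
      · simp [hk]
      · simp [hk]
    · rw [dif_neg hi, if_neg hj]
      simp only [vGen, dif_neg hi, dif_neg hj, dotProduct, Pi.star_apply]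
      have hterm : ∀ k : Fin d,
          star (if (k : ℕ) = d - 1 then (1 : ℂ) else 0) *
            (if (k : ℕ) = d - 1 then (1 : ℂ) else 0) =
          if (k : ℕ) = d - 1 then (1 : ℂ) else 0 := by
        intro k; split_ifs <;> simp
      rw [Finset.sum_congr rfl fun k _ => hterm k]
      rw [Fin.sum_univ_eq_sum_range (fun k => if k = d - 1 then (1 : ℂ) else 0)]
      rw [Finset.sum_ite_eq' (Finset.range d) (d - 1) (fun _ => (1 : ℂ))]
      simp [hlast]
  -- norms of the unnormalized vectors
  have hnorm : ∀ j : Fin d, euclNorm (vGen p e y j) =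
      if hj : (j : ℕ) < d - 1 then Real.sqrt (S ⟨j, hj⟩ ⟨j, hj⟩) else 1 := by
    intro j
    by_cases hj : (j : ℕ) < d - 1
    · rw [dif_pos hj]
      unfold euclNorm
      congr 1
      simp only [vGen, dif_pos hj]
      have hterm : ∀ k : Fin d,
          Complex.normSq (if (k : ℕ) < d - 1 then
              e (k : ℕ) * (((p (k : ℕ)).eval (y ⟨(j : ℕ), hj⟩) : ℝ) : ℂ) else 0) =
          if (k : ℕ) < d - 1 then
            (p (k : ℕ)).eval (y ⟨(j : ℕ), hj⟩) * (p (k : ℕ)).eval (y ⟨(j : ℕ), hj⟩)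
          else 0 := by
        intro k
        split_ifs with h
        · rw [Complex.normSq_mul, heNS, Complex.normSq_ofReal, one_mul]
        · simp
      rw [Finset.sum_congr rfl fun k _ => hterm k, sum_ite_lt (d - 1) hNd (fun n =>
        (p n).eval (y ⟨(j : ℕ), hj⟩) * (p n).eval (y ⟨(j : ℕ), hj⟩))]
    · rw [dif_neg hj]
      unfold euclNorm
      simp only [vGen, dif_neg hj]
      have hterm : ∀ k : Fin d,
          Complex.normSq (if (k : ℕ) = d - 1 then (1 : ℂ) else 0) =
          if (k : ℕ) = d - 1 then (1 : ℝ) else 0 := by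
        intro k; split_ifs <;> simp
      rw [Finset.sum_congr rfl fun k _ => hterm k]
      rw [Fin.sum_univ_eq_sum_range (fun k => if k = d - 1 then (1 : ℝ) else 0)]
      rw [Finset.sum_ite_eq' (Finset.range d) (d - 1) (fun _ => (1 : ℝ))]
      simp [hlast]
  -- dot products of normalized vectors
  have hfac : ∀ (c c' : ℝ) (u v : Fin d → ℂ),
      star (fun k => ((c : ℂ))⁻¹ * u k) ⬝ᵥ (fun k => ((c' : ℂ))⁻¹ * v k) =
        ((c : ℂ))⁻¹ * ((c' : ℂ))⁻¹ * (star u ⬝ᵥ v) := by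
    intro c c' u v
    simp only [dotProduct, Pi.star_apply, star_mul', star_inv₀, Complex.star_def,
      Complex.conj_ofReal, Finset.mul_sum]
    exact Finset.sum_congr rfl fun k _ => by ring
  have hndot : ∀ i j : Fin d,
      star (normalized (vGen p e y i)) ⬝ᵥ normalized (vGen p e y j) =
        if i = j then 1 else 0 := by
    intro i j
    unfold normalized
    rw [hfac, hdot]
    by_cases hij : i = j
    · subst hij
      rw [if_pos rfl]
      by_cases hj : (i : ℕ) < d - 1
      · rw [dif_pos hj, dif_pos hj, hnorm i, dif_pos hj]
        have hpos : 0 < S ⟨(i : ℕ), hj⟩ ⟨(i : ℕ), hj⟩ := hSpos ⟨(i : ℕ), hj⟩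
        have hsq : Real.sqrt (S ⟨(i : ℕ), hj⟩ ⟨(i : ℕ), hj⟩) *
            Real.sqrt (S ⟨(i : ℕ), hj⟩ ⟨(i : ℕ), hj⟩) = S ⟨(i : ℕ), hj⟩ ⟨(i : ℕ), hj⟩ :=
          Real.mul_self_sqrt (le_of_lt hpos)
        have hs0 : Real.sqrt (S ⟨(i : ℕ), hj⟩ ⟨(i : ℕ), hj⟩) ≠ 0 :=
          ne_of_gt (Real.sqrt_pos.mpr hpos)
        have hc0 : ((Real.sqrt (S ⟨(i : ℕ), hj⟩ ⟨(i : ℕ), hj⟩) : ℝ) : ℂ) ≠ 0 := by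
          exact_mod_cast hs0
        field_simp
        exact_mod_cast (Real.sq_sqrt (le_of_lt hpos)).symm
      · rw [dif_neg hj, if_neg hj, hnorm i, dif_neg hj]
        norm_num
    · rw [if_neg hij]
      by_cases hi : (i : ℕ) < d - 1 <;> by_cases hj : (j : ℕ) < d - 1
      · rw [dif_pos hi, dif_pos hj]
        have hne : (⟨(i : ℕ), hi⟩ : Fin (d - 1)) ≠ ⟨(j : ℕ), hj⟩ := by
          intro h
          have hvv : (i : ℕ) = (j : ℕ) := by
            simpa [Fin.mk.injEq] using h
          exact hij (Fin.ext hvv)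
        have h0 : S ⟨(i : ℕ), hi⟩ ⟨(j : ℕ), hj⟩ = 0 := hS0 _ _ hne
        rw [h0]
        simp
      · rw [dif_pos hi, dif_neg hj]; simp
      · rw [dif_neg hi, if_pos hj]; simp
      · exfalso
        exact hij (Fin.ext (by omega))
  exact isONB_of_dot (by omega) _ hndot

end VGen


theorem stmt3 (d : ℕ) (hd : 2 ≤ d) (p : ℕ → Polynomial ℝ)
    (hdeg : ∀ n ≤ d, (p n).natDegree = n)
    (hlead : ∀ n ≤ d, 0 < (p n).leadingCoeff)
    (w : ℝ → ℝ) (hw : ∀ t, 0 ≤ w t)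
    (horth : ∀ i ≤ d, ∀ j ≤ d,
      (∫ t : ℝ, (p i).eval t * (p j).eval t * w t) = if i = j then 1 else 0)
    (y : Fin (d - 1) → ℝ) (hyinj : Function.Injective y)
    (hyroot : ∀ j, (p (d - 1)).eval (y j) = 0)
    (α : ℝ) :
    IsONB (fun j => normalized (vThree p y j)) ∧
      IsONB (fun j => normalized (vFour p α y j)) := by
  classical
  have hpne : ∀ n ≤ d, p n ≠ 0 := fun n hn =>
    leadingCoeff_ne_zero.mp (ne_of_gt (hlead n hn))
  have horth' : ∀ i ≤ d, ∀ j ≤ d,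
      (∫ t : ℝ, (p i * p j).eval t * w t) = if i = j then 1 else 0 := by
    intro i hi j hj
    simpa only [eval_mul] using horth i hi j hj
  -- integrability of pₙ² w
  have hii_int : ∀ n ≤ d, Integrable (fun t => (p n * p n).eval t * w t) := by
    intro n hn
    by_contra hcon
    have h0 := horth' n hn n hn
    rw [integral_undef hcon] at h0
    simp at h0
  -- w is a.e. strongly measurable
  have hwm : AEStronglyMeasurable w (volume : Measure ℝ) := by
    have h0 := hii_int 0 (by omega)
    have hp00 : p 0 = C ((p 0).coeff 0) := eq_C_of_natDegree_eq_zero (hdeg 0 (by omega))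
    have hc : (p 0).coeff 0 ≠ 0 := by
      have h1 := hlead 0 (by omega)
      rw [Polynomial.leadingCoeff, hdeg 0 (by omega)] at h1
      exact ne_of_gt h1
    have h2 := (h0.aestronglyMeasurable).const_mul (((p 0).coeff 0 * (p 0).coeff 0)⁻¹)
    have hfun : (fun t => ((p 0).coeff 0 * (p 0).coeff 0)⁻¹ * ((p 0 * p 0).eval t * w t))
        = w := by
      funext t
      rw [eval_mul]
      conv_lhs => rw [hp00]
      rw [eval_C]
      field_simp
      rw [coeff_C_zero]
      field_simp
    rwa [hfun] at h2
  -- integrability of pₙ pₘ w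
  have hint2 : ∀ n ≤ d, ∀ m ≤ d, Integrable (fun t => (p n * p m).eval t * w t) := by
    intro n hn m hm
    have hmeas : AEStronglyMeasurable (fun t => (p n * p m).eval t * w t)
        (volume : Measure ℝ) :=
      ((Polynomial.continuous (p n * p m)).aestronglyMeasurable).mul hwm
    refine Integrable.mono (((hii_int n hn).add (hii_int m hm)).const_mul ((1:ℝ)/2))
      hmeas ?_
    filter_upwards with t
    simp only [eval_mul]
    set a := (p n).eval t
    set b := (p m).eval t
    have h1 : |a * b| ≤ (a * a + b * b) / 2 := by
      rw [abs_mul]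
      nlinarith [sq_nonneg (|a| - |b|), sq_abs a, sq_abs b]
    have h2 : |a * b * w t| ≤ 1/2 * (a * a * w t + b * b * w t) :=
      calc |a * b * w t| = |a * b| * w t := by
            rw [abs_mul]; rw [abs_of_nonneg (hw t)]
        _ ≤ (a * a + b * b) / 2 * w t := mul_le_mul_of_nonneg_right h1 (hw t)
        _ = 1/2 * (a * a * w t + b * b * w t) := by ring
    calc ‖a * b * w t‖ = |a * b * w t| := rfl
      _ ≤ 1/2 * (a * a * w t + b * b * w t) := h2
      _ ≤ ‖1/2 * (a * a * w t + b * b * w t)‖ := le_abs_self _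
  -- integrability of f w for any polynomial of degree ≤ 2d
  set q' : ℕ → Polynomial ℝ :=
    fun j => if j ≤ 2 * d then p ((j + 1) / 2) * p (j / 2) else X ^ j with hq'def
  have hq'deg : ∀ j, (q' j).natDegree = j := by
    intro j
    by_cases hj : j ≤ 2 * d
    · simp only [hq'def, if_pos hj]
      rw [natDegree_mul (hpne _ (by omega)) (hpne _ (by omega)),
        hdeg _ (by omega), hdeg _ (by omega)]
      omega
    · simp only [hq'def, if_neg hj, natDegree_X_pow]
  have hq'ne : ∀ j, (q' j).leadingCoeff ≠ 0 := by
    intro j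
    rw [Ne, leadingCoeff_eq_zero]
    by_cases hj : j ≤ 2 * d
    · simp only [hq'def, if_pos hj]
      exact mul_ne_zero (hpne _ (by omega)) (hpne _ (by omega))
    · simp only [hq'def, if_neg hj]
      exact (monic_X_pow j).ne_zero
  have hint : ∀ f : Polynomial ℝ, f.natDegree ≤ 2 * d →
      Integrable (fun t => f.eval t * w t) := by
    intro f hf
    obtain ⟨a, hfa⟩ := expand_aux q' hq'deg hq'ne (2 * d) f hf
    rw [hfa]
    have heq : (fun t => (∑ j ∈ Finset.range (2 * d + 1), C (a j) * q' j).eval t * w t)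
        = fun t => ∑ j ∈ Finset.range (2 * d + 1), a j * ((q' j).eval t * w t) := by
      funext t
      rw [eval_finset_sum, Finset.sum_mul]
      exact Finset.sum_congr rfl fun j _ => by rw [eval_mul, eval_C]; ring
    rw [heq]
    apply integrable_finset_sum
    intro j hj
    have hj' : j ≤ 2 * d := by
      have := Finset.mem_range.mp hj; omega
    have hqj : q' j = p ((j + 1) / 2) * p (j / 2) := by
      rw [hq'def]; exact if_pos hj'
    rw [hqj]
    exact (hint2 _ (by omega) _ (by omega)).const_mul (a j)
  -- substitute basis p' for low degrees
  set p' : ℕ → Polynomial ℝ := fun n => if n ≤ d then p n else X ^ n with hp'def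
  have hp'deg : ∀ n, (p' n).natDegree = n := by
    intro n
    by_cases hn : n ≤ d
    · simp only [hp'def, if_pos hn]; exact hdeg n hn
    · simp only [hp'def, if_neg hn, natDegree_X_pow]
  have hp'ne : ∀ n, (p' n).leadingCoeff ≠ 0 := by
    intro n
    rw [Ne, leadingCoeff_eq_zero]
    by_cases hn : n ≤ d
    · simp only [hp'def, if_pos hn]; exact hpne n hn
    · simp only [hp'def, if_neg hn]; exact (monic_X_pow n).ne_zero
  -- orthogonality to p_{d-1}
  have hzero : ∀ q : Polynomial ℝ, q.natDegree ≤ d - 2 →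
      (∫ t : ℝ, (q * p (d - 1)).eval t * w t) = 0 := by
    intro q hq
    obtain ⟨a, hqa⟩ := expand_aux p' hp'deg hp'ne (d - 2) q hq
    have heq : (fun t => (q * p (d - 1)).eval t * w t)
        = fun t => ∑ j ∈ Finset.range (d - 2 + 1),
            a j * ((p j * p (d - 1)).eval t * w t) := by
      funext t
      rw [hqa, Finset.sum_mul, eval_finset_sum, Finset.sum_mul]
      refine Finset.sum_congr rfl fun j hj => ?_
      have hj' : j ≤ d - 2 := by have := Finset.mem_range.mp hj; omega
      have hpj : p' j = p j := by rw [hp'def]; exact if_pos (by omega)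
      rw [hpj, eval_mul, eval_mul, eval_mul, eval_C]
      ring
    rw [heq, integral_finset_sum]
    · refine Finset.sum_eq_zero fun j hj => ?_
      have hj' : j ≤ d - 2 := by have := Finset.mem_range.mp hj; omega
      rw [integral_const_mul, horth' j (by omega) (d - 1) (by omega),
        if_neg (by omega), mul_zero]
    · intro j hj
      have hj' : j ≤ d - 2 := by have := Finset.mem_range.mp hj; omega
      exact (hint2 j (by omega) (d - 1) (by omega)).const_mul (a j)
  -- Lagrange interpolation and quadrature weights
  have hyinj' : Set.InjOn y ↑(Finset.univ : Finset (Fin (d - 1))) :=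
    fun a _ b _ h => hyinj h
  have hcard : (Finset.univ : Finset (Fin (d - 1))).card = d - 1 := by simp
  set ℓ : Fin (d - 1) → Polynomial ℝ := fun j => Lagrange.basis Finset.univ y j with hℓdef
  have hℓdeg : ∀ j, (ℓ j).natDegree = d - 2 := by
    intro j
    rw [hℓdef]
    rw [Lagrange.natDegree_basis hyinj' (Finset.mem_univ j), hcard]
    omega
  set lam : Fin (d - 1) → ℝ := fun j => ∫ t : ℝ, (ℓ j).eval t * w t with hlamdef
  have hinterp : ∀ r : Polynomial ℝ, r.natDegree ≤ d - 2 →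
      (∫ t : ℝ, r.eval t * w t) = ∑ j : Fin (d - 1), r.eval (y j) * lam j := by
    intro r hr
    have hdeg' : r.degree < ((Finset.univ : Finset (Fin (d - 1))).card : WithBot ℕ) := by
      rw [hcard]
      calc r.degree ≤ (r.natDegree : WithBot ℕ) := degree_le_natDegree
        _ ≤ ((d - 2 : ℕ) : WithBot ℕ) := by exact_mod_cast hr
        _ < ((d - 1 : ℕ) : WithBot ℕ) := by exact_mod_cast (by omega : d - 2 < d - 1)
    have hrint := Lagrange.eq_interpolate hyinj' hdeg'
    rw [Lagrange.interpolate_apply] at hrint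
    have heq : (fun t => r.eval t * w t)
        = fun t => ∑ j : Fin (d - 1), r.eval (y j) * ((ℓ j).eval t * w t) := by
      funext t
      conv_lhs => rw [hrint]
      rw [eval_finset_sum]
      rw [Finset.sum_mul]
      refine Finset.sum_congr rfl fun j _ => ?_
      rw [eval_mul, eval_C, hℓdef]
      ring
    rw [heq, integral_finset_sum]
    · refine Finset.sum_congr rfl fun j _ => ?_
      rw [integral_const_mul, hlamdef]
    · intro j _
      exact (hint (ℓ j) (by rw [hℓdeg]; omega)).const_mul _
  -- Gaussian quadrature exactness on products
  have hquad : ∀ k ≤ d - 2, ∀ m ≤ d - 2,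
      (if k = m then (1:ℝ) else 0)
        = ∑ j : Fin (d - 1), lam j * ((p k).eval (y j) * (p m).eval (y j)) := by
    intro k hk m hm
    have hpd1ne : p (d - 1) ≠ 0 := hpne _ (by omega)
    set P : Polynomial ℝ := p (d - 1) * C (p (d - 1)).leadingCoeff⁻¹ with hPdef
    have hPm : P.Monic := monic_mul_leadingCoeff_inv hpd1ne
    set f : Polynomial ℝ := p k * p m with hfdef
    have hfdeg : f.natDegree ≤ 2 * d - 4 := by
      rw [hfdef, natDegree_mul (hpne _ (by omega)) (hpne _ (by omega)),
        hdeg _ (by omega), hdeg _ (by omega)]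
      omega
    set r : Polynomial ℝ := f %ₘ P with hrdef
    have hfr : f = P * (f /ₘ P) + r := by
      conv_lhs => rw [← modByMonic_add_div f P]
      ring
    set Q : Polynomial ℝ := C (p (d - 1)).leadingCoeff⁻¹ * (f /ₘ P) with hQdef
    have hPQ : P * (f /ₘ P) = Q * p (d - 1) := by rw [hPdef, hQdef]; ring
    have hPdeg : P.natDegree = d - 1 := by
      rw [hPdef, natDegree_mul hpd1ne (fun h => by
        simp only [C_eq_zero, inv_eq_zero, leadingCoeff_eq_zero] at h
        exact hpd1ne h), natDegree_C, hdeg _ (by omega)]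
      omega
    have hrdeg : r.natDegree ≤ d - 2 := by
      by_cases hr0 : r = 0
      · rw [hr0, natDegree_zero]; omega
      · have h1 : r.degree < P.degree := degree_modByMonic_lt f hPm
        have h2 : r.natDegree < P.natDegree := natDegree_lt_natDegree hr0 h1
        omega
    have hQdeg : Q.natDegree ≤ d - 2 := by
      by_cases hQ0 : Q = 0
      · rw [hQ0, natDegree_zero]; omega
      · have h1 : Q * p (d - 1) = f - r := by rw [← hPQ]; linear_combination -hfr
        have h2 : (f - r).natDegree ≤ 2 * d - 4 :=
          le_trans (natDegree_sub_le f r) (max_le hfdeg (by omega))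
        have h3 : Q.natDegree + (d - 1) ≤ 2 * d - 4 := by
          rw [← hdeg (d - 1) (by omega), ← natDegree_mul hQ0 hpd1ne, h1]
          exact h2
        omega
    have hr_eval : ∀ j, r.eval (y j) = f.eval (y j) := by
      intro j
      conv_rhs => rw [hfr]
      rw [eval_add, eval_mul, hPdef, eval_mul, hyroot j]
      ring
    have hfint : (∫ t : ℝ, f.eval t * w t) = if k = m then 1 else 0 :=
      horth' k (by omega) m (by omega)
    have hsplit : (∫ t : ℝ, f.eval t * w t)
        = (∫ t : ℝ, (Q * p (d - 1)).eval t * w t) + ∫ t : ℝ, r.eval t * w t := by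
      have heq : (fun t => f.eval t * w t)
          = fun t => (Q * p (d - 1)).eval t * w t + r.eval t * w t := by
        funext t
        conv_lhs => rw [hfr, hPQ]
        rw [eval_add]
        ring
      rw [heq]
      exact integral_add
        (hint _ (le_trans natDegree_mul_le (by rw [hdeg (d - 1) (by omega)]; omega)))
        (hint _ (by omega))
    calc (if k = m then (1:ℝ) else 0) = ∫ t : ℝ, f.eval t * w t := hfint.symm
      _ = (∫ t : ℝ, (Q * p (d - 1)).eval t * w t) + ∫ t : ℝ, r.eval t * w t := hsplit
      _ = 0 + ∑ j : Fin (d - 1), r.eval (y j) * lam j := by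
          rw [hzero Q hQdeg, hinterp r hrdeg]
      _ = ∑ j : Fin (d - 1), lam j * ((p k).eval (y j) * (p m).eval (y j)) := by
          rw [zero_add]
          refine Finset.sum_congr rfl fun j _ => ?_
          rw [hr_eval j, hfdef, eval_mul]
          ring
  -- matrix argument
  set Mx : Matrix (Fin (d - 1)) (Fin (d - 1)) ℝ :=
    Matrix.of fun j k => (p (k : ℕ)).eval (y j) with hMxdef
  set D : Matrix (Fin (d - 1)) (Fin (d - 1)) ℝ := Matrix.diagonal lam with hDdef
  have hMDM : Mxᵀ * D * Mx = 1 := by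
    ext k m
    rw [Matrix.mul_assoc, Matrix.mul_apply]
    have hterm : ∀ j, Mxᵀ k j * (D * Mx) j m
        = lam j * ((p (k : ℕ)).eval (y j) * (p (m : ℕ)).eval (y j)) := by
      intro j
      rw [Matrix.transpose_apply, hDdef, Matrix.diagonal_mul, hMxdef]
      simp only [Matrix.of_apply]
      ring
    rw [Finset.sum_congr rfl fun j _ => hterm j]
    rw [← hquad (k : ℕ) (by omega) (m : ℕ) (by omega)]
    simp [Matrix.one_apply, Fin.val_eq_val]
  have hMMD : D * (Mx * Mxᵀ) = 1 := by
    have h2 : Mx * (Mxᵀ * D) = 1 := mul_eq_one_comm.mp hMDM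
    have h3 : Mx * Mxᵀ * D = 1 := by rw [Matrix.mul_assoc]; exact h2
    exact mul_eq_one_comm.mp h3
  have hMM : ∀ i j : Fin (d - 1),
      lam i * ∑ k : Fin (d - 1), (p (k : ℕ)).eval (y i) * (p (k : ℕ)).eval (y j)
        = if i = j then 1 else 0 := by
    intro i j
    have h := congrFun (congrFun hMMD i) j
    rw [hDdef, Matrix.diagonal_mul, Matrix.mul_apply] at h
    simp only [Matrix.transpose_apply, hMxdef, Matrix.of_apply] at h
    rw [Matrix.one_apply] at h
    exact h
  have hS0 : ∀ i j : Fin (d - 1), i ≠ j →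
      ∑ k : Fin (d - 1), (p (k : ℕ)).eval (y i) * (p (k : ℕ)).eval (y j) = 0 := by
    intro i j hij
    have hdg := hMM i i
    rw [if_pos rfl] at hdg
    have hlamne : lam i ≠ 0 := fun h => by
      rw [h, zero_mul] at hdg; exact zero_ne_one hdg
    have hoff := hMM i j
    rw [if_neg hij] at hoff
    exact (mul_eq_zero.mp hoff).resolve_left hlamne
  have hSpos : ∀ i : Fin (d - 1),
      0 < ∑ k : Fin (d - 1), (p (k : ℕ)).eval (y i) * (p (k : ℕ)).eval (y i) := by
    intro i
    have hdg := hMM i i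
    rw [if_pos rfl] at hdg
    have hne : (∑ k : Fin (d - 1), (p (k : ℕ)).eval (y i) * (p (k : ℕ)).eval (y i)) ≠ 0 :=
      fun h => by rw [h, mul_zero] at hdg; exact zero_ne_one hdg
    have hnn : 0 ≤ ∑ k : Fin (d - 1), (p (k : ℕ)).eval (y i) * (p (k : ℕ)).eval (y i) :=
      Finset.sum_nonneg fun k _ => mul_self_nonneg _
    exact lt_of_le_of_ne hnn (Ne.symm hne)
  constructor
  · simp only [vThree_eq_vGen p y]
    exact isONB_vGen hd p _ (fun k => by simp) y hS0 hSpos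
  · simp only [vFour_eq_vGen p α y]
    refine isONB_vGen hd p _ (fun k => ?_) y hS0 hSpos
    have hconj : (starRingEnd ℂ) ((k : ℂ) * (α : ℂ) * Complex.I)
        = -((k : ℂ) * (α : ℂ) * Complex.I) := by
      simp only [_root_.map_mul, Complex.conj_I, Complex.conj_ofReal, Complex.conj_natCast]
      ring
    rw [← Complex.exp_conj, hconj, ← Complex.exp_add, neg_add_cancel, Complex.exp_zero]
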